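/- Let $G$ be a connected graph on $n$ vertices with $diam(G) = 3$ whose complement $\overline{G}$ is also connected. Then $trc(\overline{G}) \leq n + 1$, with equality if and only if $\overline{G}$ is isomorphic to a double star. -/

import Mathlib

open SimpleGraph

/-- A total coloring (edge colors `cE`, vertex colors `cV`) makes `G`
total-rainbow connected if any two distinct vertices are joined by a path
whose edges and internal vertices receive pairwise distinct colors. -/
def IsTRCColoring {V : Type*} (G : SimpleGraph V) {k : ℕ}
    (cE : Sym2 V → Fin k) (cV : V → Fin k) : Prop :=
  ∀ u v : V, u ≠ v → ∃ p : G.Walk u v, p.IsPath ∧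
    (p.edges.map cE ++ p.support.tail.dropLast.map cV).Nodup

/-- The total-rainbow connection number of `G`. -/
noncomputable def trc {V : Type*} (G : SimpleGraph V) : ℕ :=
  sInf {k | ∃ (cE : Sym2 V → Fin k) (cV : V → Fin k), IsTRCColoring G cE cV}

/-- A double star: a tree obtained from an edge by attaching leaves to its
two endpoints (its only internal vertices are two adjacent vertices). -/
def IsDoubleStar {V : Type*} [Fintype V] [DecidableEq V]
    (H : SimpleGraph V) [DecidableRel H.Adj] : Prop :=
  H.IsTree ∧ ∃ u v : V, H.Adj u v ∧
    ∀ w : V, w ≠ u → w ≠ v → H.degree w = 1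


namespace TRCaux

variable {V : Type*} [DecidableEq V]

def bCE {k : ℕ} (x y : V) (ι : V → Fin k) (χ : Fin k) : Sym2 V → Fin k :=
  Sym2.lift ⟨fun a b =>
    if a = x ∨ a = y then (if b = x ∨ b = y then χ else ι b)
    else if b = x ∨ b = y then ι a else χ,
    by intro a b; by_cases ha : a = x ∨ a = y <;> by_cases hb : b = x ∨ b = y <;>
       simp [ha, hb]⟩

variable {k : ℕ} {x y a b : V} {ι : V → Fin k} {χ : Fin k}

lemma bCE_mk (a b : V) : bCE x y ι χ s(a, b) =
    (if a = x ∨ a = y then (if b = x ∨ b = y then χ else ι b)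
     else if b = x ∨ b = y then ι a else χ) := rfl

lemma bCE_xy : bCE x y ι χ s(x, y) = χ := by simp [bCE_mk]

lemma bCE_yx : bCE x y ι χ s(y, x) = χ := by simp [bCE_mk]

lemma bCE_cn (ha : a = x ∨ a = y) (hb1 : b ≠ x) (hb2 : b ≠ y) :
    bCE x y ι χ s(a, b) = ι b := by simp [bCE_mk, ha, hb1, hb2]

lemma bCE_nc (ha : a = x ∨ a = y) (hb1 : b ≠ x) (hb2 : b ≠ y) :
    bCE x y ι χ s(b, a) = ι b := by
  have h1 : ¬ (b = x ∨ b = y) := by simp [hb1, hb2]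
  rcases ha with h | h <;> subst h <;> simp [bCE_mk, h1]

lemma nodup3 {α : Type*} {a b c : α} (h1 : a ≠ b) (h2 : a ≠ c) (h3 : b ≠ c) :
    [a, b, c].Nodup := by simp [h1, h2, h3]

lemma nodup5 {α : Type*} {a b c d e : α} (h1 : a ≠ b) (h2 : a ≠ c) (h3 : a ≠ d) (h4 : a ≠ e)
    (h5 : b ≠ c) (h6 : b ≠ d) (h7 : b ≠ e) (h8 : c ≠ d) (h9 : c ≠ e) (h10 : d ≠ e) :
    [a, b, c, d, e].Nodup := by simp [h1, h2, h3, h4, h5, h6, h7, h8, h9, h10]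

end TRCaux

open TRCaux in
lemma mem_of_dom {V : Type*} [Fintype V] [DecidableEq V] (H : SimpleGraph V) (x y : V)
    (hxy : H.Adj x y)
    (hdom : ∀ w, w ≠ x → w ≠ y → H.Adj w x ∨ H.Adj w y) :
    ∃ (cE : Sym2 V → Fin (Fintype.card V + 1)) (cV : V → Fin (Fintype.card V + 1)),
      IsTRCColoring H cE cV := by
  set n := Fintype.card V with hn
  set ι : V → Fin (n+1) := fun v => ((Fintype.equivFin V) v).castSucc with hι
  have ιinj : ∀ a b : V, a ≠ b → ι a ≠ ι b := by
    intro a b hab h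
    exact hab ((Fintype.equivFin V).injective (Fin.castSucc_injective _ h))
  have ιχ : ∀ v : V, ι v ≠ Fin.last n := fun v => (Fin.castSucc_lt_last _).ne
  refine ⟨bCE x y ι (Fin.last n), ι, ?_⟩
  set cE := bCE x y ι (Fin.last n) with hcE
  have hxyne : x ≠ y := hxy.ne
  have exy : cE s(x,y) = Fin.last n := bCE_xy
  have eyx : cE s(y,x) = Fin.last n := bCE_yx
  have ecn : ∀ a b : V, (a = x ∨ a = y) → b ≠ x → b ≠ y →
      cE s(a,b) = ι b ∧ cE s(b,a) = ι b :=
    fun a b ha h1 h2 => ⟨bCE_cn ha h1 h2, bCE_nc ha h1 h2⟩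
  have key2 : ∀ z o u v : V, (z = x ∧ o = y) ∨ (z = y ∧ o = x) →
      H.Adj u z → H.Adj v z → u ≠ v → [cE s(u,z), cE s(z,v), ι z].Nodup := by
    intro z o u v hzo hu hv huv
    have hz : z = x ∨ z = y := by tauto
    have eoz : cE s(o,z) = Fin.last n := by
      rcases hzo with ⟨h1, h2⟩ | ⟨h1, h2⟩ <;> subst h1 <;> subst h2
      · exact eyx
      · exact exy
    have ezo : cE s(z,o) = Fin.last n := by
      rcases hzo with ⟨h1, h2⟩ | ⟨h1, h2⟩ <;> subst h1 <;> subst h2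
      · exact exy
      · exact eyx
    have notc : ∀ w : V, H.Adj w z → w ≠ o → w ≠ x ∧ w ≠ y := by
      intro w hw hwo
      rcases hzo with ⟨h1, h2⟩ | ⟨h1, h2⟩ <;> subst h1 <;> subst h2
      · exact ⟨hw.ne, hwo⟩
      · exact ⟨hwo, hw.ne⟩
    by_cases hu0 : u = o
    · subst hu0
      have hv' := notc v hv (fun h => huv h.symm)
      rw [eoz, (ecn z v hz hv'.1 hv'.2).1]
      exact nodup3 (Ne.symm (ιχ v)) (Ne.symm (ιχ z)) (ιinj v z hv.ne)
    · by_cases hv0 : v = o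
      · subst hv0
        have hu' := notc u hu hu0
        rw [ezo, (ecn z u hz hu'.1 hu'.2).2]
        exact nodup3 (ιχ u) (ιinj u z hu.ne) (Ne.symm (ιχ z))
      · have hu' := notc u hu hu0
        have hv' := notc v hv hv0
        rw [(ecn z u hz hu'.1 hu'.2).2, (ecn z v hz hv'.1 hv'.2).1]
        exact nodup3 (ιinj u v huv) (ιinj u z hu.ne) (ιinj v z hv.ne)
  intro u v huv
  by_cases hadj : H.Adj u v
  · exact ⟨.cons hadj .nil, by simp [Walk.isPath_def, huv], by simp⟩
  by_cases hbx : H.Adj u x ∧ H.Adj v x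
  · refine ⟨.cons hbx.1 (.cons hbx.2.symm .nil), ?_, ?_⟩
    · simp [Walk.isPath_def, hbx.1.ne, huv, Ne.symm hbx.2.ne]
    · have hl : ((Walk.cons hbx.1 (Walk.cons hbx.2.symm .nil)).edges.map cE ++
          (Walk.cons hbx.1 (Walk.cons hbx.2.symm .nil)).support.tail.dropLast.map ι)
          = [cE s(u,x), cE s(x,v), ι x] := by simp
      rw [hl]
      exact key2 x y u v (Or.inl ⟨rfl, rfl⟩) hbx.1 hbx.2 huv
  by_cases hby : H.Adj u y ∧ H.Adj v y
  · refine ⟨.cons hby.1 (.cons hby.2.symm .nil), ?_, ?_⟩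
    · simp [Walk.isPath_def, hby.1.ne, huv, Ne.symm hby.2.ne]
    · have hl : ((Walk.cons hby.1 (Walk.cons hby.2.symm .nil)).edges.map cE ++
          (Walk.cons hby.1 (Walk.cons hby.2.symm .nil)).support.tail.dropLast.map ι)
          = [cE s(u,y), cE s(y,v), ι y] := by simp
      rw [hl]
      exact key2 y x u v (Or.inr ⟨rfl, rfl⟩) hby.1 hby.2 huv
  -- cross case
  have hux : u ≠ x := by
    rintro rfl
    have hvy : v ≠ y := by rintro rfl; exact hadj hxy
    rcases hdom v (fun h => huv h.symm) hvy with h | h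
    · exact hadj h.symm
    · exact hby ⟨hxy, h⟩
  have huy : u ≠ y := by
    rintro rfl
    have hvx : v ≠ x := by rintro rfl; exact hadj hxy.symm
    rcases hdom v hvx (fun h => huv h.symm) with h | h
    · exact hbx ⟨hxy.symm, h⟩
    · exact hadj h.symm
  have hvx : v ≠ x := by
    rintro rfl
    rcases hdom u huv huy with h | h
    · exact hadj h
    · exact hby ⟨h, hxy⟩
  have hvy : v ≠ y := by
    rintro rfl
    rcases hdom u hux huv with h | h
    · exact hbx ⟨h, hxy.symm⟩
    · exact hadj h
  rcases hdom u hux huy with hu | hu <;> rcases hdom v hvx hvy with hv | hv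
  · exact absurd ⟨hu, hv⟩ hbx
  · -- u adj x, v adj y : path u-x-y-v
    refine ⟨.cons hu (.cons hxy (.cons hv.symm .nil)), ?_, ?_⟩
    · simp [Walk.isPath_def, hux, huy, huv, hxyne, Ne.symm hvx, Ne.symm hvy]
    · have hl : ((Walk.cons hu (Walk.cons hxy (Walk.cons hv.symm .nil))).edges.map cE ++
          (Walk.cons hu (Walk.cons hxy (Walk.cons hv.symm .nil))).support.tail.dropLast.map ι)
          = [cE s(u,x), cE s(x,y), cE s(y,v), ι x, ι y] := by simp
      rw [hl, exy, (ecn x u (Or.inl rfl) hux huy).2, (ecn y v (Or.inr rfl) hvx hvy).1]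
      exact nodup5 (ιχ u) (ιinj u v huv) (ιinj u x hux) (ιinj u y huy)
        (Ne.symm (ιχ v)) (Ne.symm (ιχ x)) (Ne.symm (ιχ y))
        (ιinj v x hvx) (ιinj v y hvy) (ιinj x y hxyne)
  · -- u adj y, v adj x : path u-y-x-v
    refine ⟨.cons hu (.cons hxy.symm (.cons hv.symm .nil)), ?_, ?_⟩
    · simp [Walk.isPath_def, hux, huy, huv, Ne.symm hxyne, Ne.symm hvx, Ne.symm hvy]
    · have hl : ((Walk.cons hu (Walk.cons hxy.symm (Walk.cons hv.symm .nil))).edges.map cE ++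
          (Walk.cons hu (Walk.cons hxy.symm (Walk.cons hv.symm .nil))).support.tail.dropLast.map ι)
          = [cE s(u,y), cE s(y,x), cE s(x,v), ι y, ι x] := by simp
      rw [hl, eyx, (ecn y u (Or.inr rfl) hux huy).2, (ecn x v (Or.inl rfl) hvx hvy).1]
      exact nodup5 (ιχ u) (ιinj u v huv) (ιinj u y huy) (ιinj u x hux)
        (Ne.symm (ιχ v)) (Ne.symm (ιχ y)) (Ne.symm (ιχ x))
        (ιinj v y hvy) (ιinj v x hvx) (ιinj y x (Ne.symm hxyne))
  · exact absurd ⟨hu, hv⟩ hby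

open TRCaux in
lemma trc_le_of_pattern {V : Type*} [Fintype V] [DecidableEq V] (H : SimpleGraph V)
    (x y b0 a0 : V) (hxy : H.Adj x y)
    (hdom : ∀ w, w ≠ x → w ≠ y → H.Adj w x ∨ H.Adj w y)
    (hb0y : H.Adj b0 y) (hb0x : b0 ≠ x)
    (hcase : (a0 = b0 ∧ H.Adj b0 x) ∨
      (a0 ≠ b0 ∧ a0 ≠ x ∧ a0 ≠ y ∧ H.Adj a0 b0 ∧ (H.Adj a0 x ∨ H.Adj a0 y))) :
    trc H ≤ Fintype.card V := by
  apply Nat.sInf_le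
  set n := Fintype.card V with hn
  set ι : V → Fin n := fun v => (Fintype.equivFin V) v with hι
  have ιinj : ∀ a b : V, a ≠ b → ι a ≠ ι b := by
    intro a b hab h
    exact hab ((Fintype.equivFin V).injective h)
  have hxyne : x ≠ y := hxy.ne
  have hb0y' : b0 ≠ y := hb0y.ne
  have ha0x : a0 ≠ x := by
    rcases hcase with ⟨h, _⟩ | ⟨_, h, _, _, _⟩
    · exact h ▸ hb0x
    · exact h
  have ha0y : a0 ≠ y := by
    rcases hcase with ⟨h, _⟩ | ⟨_, _, h, _, _⟩
    · exact h ▸ hb0y'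
    · exact h
  refine ⟨fun e => if e = s(y, b0) then ι a0 else bCE x y ι (ι b0) e, ι, ?_⟩
  set cE := fun e => if e = s(y, b0) then ι a0 else bCE x y ι (ι b0) e with hcE
  have exy : cE s(x,y) = ι b0 := by
    have h : s(x,y) ≠ s(y,b0) := by rw [ne_eq, Sym2.eq_iff]; tauto
    rw [hcE]; simp only [h, if_false]; exact bCE_xy
  have eyx : cE s(y,x) = ι b0 := by
    have h : s(y,x) ≠ s(y,b0) := by rw [ne_eq, Sym2.eq_iff]; tauto
    rw [hcE]; simp only [h, if_false]; exact bCE_yx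
  have eX : ∀ w : V, H.Adj w x → w ≠ y → cE s(w,x) = ι w ∧ cE s(x,w) = ι w := by
    intro w hw hwy
    have h1 : s(w,x) ≠ s(y,b0) := by rw [ne_eq, Sym2.eq_iff]; tauto
    have h2 : s(x,w) ≠ s(y,b0) := by rw [ne_eq, Sym2.eq_iff]; tauto
    rw [hcE]
    simp only [h1, h2, if_false]
    exact ⟨bCE_nc (Or.inl rfl) hw.ne hwy, bCE_cn (Or.inl rfl) hw.ne hwy⟩
  have eY : ∀ w : V, H.Adj w y →
      cE s(w,y) = (if w = b0 then ι a0 else if w = x then ι b0 else ι w) ∧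
      cE s(y,w) = (if w = b0 then ι a0 else if w = x then ι b0 else ι w) := by
    intro w hw
    by_cases hwb : w = b0
    · subst hwb
      rw [hcE]
      simp [Sym2.eq_swap]
    · have h1 : s(w,y) ≠ s(y,b0) := by rw [ne_eq, Sym2.eq_iff]; tauto
      have h2 : s(y,w) ≠ s(y,b0) := by rw [ne_eq, Sym2.eq_iff]; tauto
      rw [hcE]
      simp only [h1, h2, if_false, hwb]
      by_cases hwx : w = x
      · subst hwx
        simp only [if_pos rfl]
        exact ⟨bCE_xy, bCE_yx⟩
      · simp only [hwx, if_false]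
        exact ⟨bCE_nc (Or.inr rfl) hwx hw.ne, bCE_cn (Or.inr rfl) hwx hw.ne⟩
  intro u v huv
  by_cases hadj : H.Adj u v
  · exact ⟨.cons hadj .nil, by simp [Walk.isPath_def, huv], by simp⟩
  by_cases hbx : H.Adj u x ∧ H.Adj v x
  · -- path u-x-v
    refine ⟨.cons hbx.1 (.cons hbx.2.symm .nil), ?_, ?_⟩
    · simp [Walk.isPath_def, hbx.1.ne, huv, Ne.symm hbx.2.ne]
    · have hl : ((Walk.cons hbx.1 (Walk.cons hbx.2.symm .nil)).edges.map cE ++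
          (Walk.cons hbx.1 (Walk.cons hbx.2.symm .nil)).support.tail.dropLast.map ι)
          = [cE s(u,x), cE s(x,v), ι x] := by simp
      rw [hl]
      by_cases huy0 : y = u
      · subst huy0
        have hvy : v ≠ y := fun h => huv h.symm
        have hvb : v ≠ b0 := by rintro rfl; exact hadj hb0y.symm
        rw [eyx, (eX v hbx.2 hvy).2]
        exact nodup3 (ιinj b0 v (Ne.symm hvb)) (ιinj b0 x hb0x) (ιinj v x hbx.2.ne)
      · by_cases hvy0 : y = v
        · subst hvy0
          have hub : u ≠ b0 := by rintro rfl; exact hadj hb0y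
          rw [exy, (eX u hbx.1 (Ne.symm huy0)).1]
          exact nodup3 (ιinj u b0 hub) (ιinj u x hbx.1.ne) (ιinj b0 x hb0x)
        · rw [(eX u hbx.1 (Ne.symm huy0)).1, (eX v hbx.2 (Ne.symm hvy0)).2]
          exact nodup3 (ιinj u v huv) (ιinj u x hbx.1.ne) (ιinj v x hbx.2.ne)
  by_cases hby : H.Adj u y ∧ H.Adj v y
  · -- path u-y-v
    refine ⟨.cons hby.1 (.cons hby.2.symm .nil), ?_, ?_⟩
    · simp [Walk.isPath_def, hby.1.ne, huv, Ne.symm hby.2.ne]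
    · have hl : ((Walk.cons hby.1 (Walk.cons hby.2.symm .nil)).edges.map cE ++
          (Walk.cons hby.1 (Walk.cons hby.2.symm .nil)).support.tail.dropLast.map ι)
          = [cE s(u,y), cE s(y,v), ι y] := by simp
      rw [hl, (eY u hby.1).1, (eY v hby.2).2]
      by_cases hub : b0 = u
      · subst hub
        have hvb : v ≠ b0 := fun h => huv h.symm
        rw [if_pos rfl, if_neg hvb]
        by_cases hvx : x = v
        · subst hvx
          have hc2 : a0 ≠ b0 := by
            rcases hcase with ⟨_, h2⟩ | ⟨h1, _, _, _, _⟩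
            · exact absurd h2 hadj
            · exact h1
          rw [if_pos rfl]
          exact nodup3 (ιinj a0 b0 hc2) (ιinj a0 y ha0y) (ιinj b0 y hb0y')
        · have hva : v ≠ a0 := by
            rcases hcase with ⟨h1, _⟩ | ⟨_, _, _, h4, _⟩
            · rintro rfl; exact (h1 ▸ hvb) rfl
            · rintro rfl; exact hadj h4.symm
          rw [if_neg (Ne.symm hvx)]
          exact nodup3 (ιinj a0 v (Ne.symm hva)) (ιinj a0 y ha0y) (ιinj v y hby.2.ne)
      · by_cases hvb : b0 = v
        · subst hvb
          rw [if_neg (Ne.symm hub), if_pos rfl]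
          by_cases hux0 : x = u
          · subst hux0
            have hc2 : a0 ≠ b0 := by
              rcases hcase with ⟨_, h2⟩ | ⟨h1, _, _, _, _⟩
              · exact absurd h2.symm hadj
              · exact h1
            rw [if_pos rfl]
            exact nodup3 (ιinj b0 a0 (Ne.symm hc2)) (ιinj b0 y hb0y') (ιinj a0 y ha0y)
          · have hua : u ≠ a0 := by
              rintro rfl
              rcases hcase with ⟨h1, _⟩ | ⟨_, _, _, h4, _⟩
              · exact (h1 ▸ hub) rfl
              · exact hadj h4
            rw [if_neg (Ne.symm hux0)]
            exact nodup3 (ιinj u a0 hua) (ιinj u y hby.1.ne) (ιinj a0 y ha0y)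
        · rw [if_neg (Ne.symm hub), if_neg (Ne.symm hvb)]
          by_cases hux0 : x = u
          · subst hux0
            have hvx : v ≠ x := fun h => huv h.symm
            rw [if_pos rfl, if_neg hvx]
            exact nodup3 (ιinj b0 v (Ne.symm (Ne.symm hvb))) (ιinj b0 y hb0y') (ιinj v y hby.2.ne)
          · by_cases hvx0 : x = v
            · subst hvx0
              rw [if_neg (Ne.symm hux0), if_pos rfl]
              exact nodup3 (ιinj u b0 (Ne.symm hub)) (ιinj u y hby.1.ne) (ιinj b0 y hb0y')
            · rw [if_neg (Ne.symm hux0), if_neg (Ne.symm hvx0)]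
              exact nodup3 (ιinj u v huv) (ιinj u y hby.1.ne) (ιinj v y hby.2.ne)
  -- cross cases
  have hux : u ≠ x := by
    rintro rfl
    have hvy : v ≠ y := by rintro rfl; exact hadj hxy
    rcases hdom v (fun h => huv h.symm) hvy with h | h
    · exact hadj h.symm
    · exact hby ⟨hxy, h⟩
  have huy : u ≠ y := by
    rintro rfl
    have hvx : v ≠ x := by rintro rfl; exact hadj hxy.symm
    rcases hdom v hvx (fun h => huv h.symm) with h | h
    · exact hbx ⟨hxy.symm, h⟩
    · exact hadj h.symm
  have hvx : v ≠ x := by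
    rintro rfl
    rcases hdom u huv huy with h | h
    · exact hadj h
    · exact hby ⟨h, hxy⟩
  have hvy : v ≠ y := by
    rintro rfl
    rcases hdom u hux huv with h | h
    · exact hbx ⟨h, hxy.symm⟩
    · exact hadj h
  rcases hdom u hux huy with hu | hu <;> rcases hdom v hvx hvy with hv | hv
  · exact absurd ⟨hu, hv⟩ hbx
  · -- u adj x, v adj y : path u-x-y-v
    have hnuy : ¬ H.Adj u y := fun h => hby ⟨h, hv⟩
    have hub : u ≠ b0 := by rintro rfl; exact hnuy hb0y
    refine ⟨.cons hu (.cons hxy (.cons hv.symm .nil)), ?_, ?_⟩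
    · simp [Walk.isPath_def, hux, huy, huv, hxyne, Ne.symm hvx, Ne.symm hvy]
    · have hl : ((Walk.cons hu (Walk.cons hxy (Walk.cons hv.symm .nil))).edges.map cE ++
          (Walk.cons hu (Walk.cons hxy (Walk.cons hv.symm .nil))).support.tail.dropLast.map ι)
          = [cE s(u,x), cE s(x,y), cE s(y,v), ι x, ι y] := by simp
      rw [hl, exy, (eX u hu huy).1, (eY v hv).2]
      by_cases hvb0 : b0 = v
      · subst hvb0
        have hc2 : a0 ≠ b0 ∧ H.Adj a0 b0 := by
          rcases hcase with ⟨_, h2⟩ | ⟨h1, _, _, h4, _⟩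
          · exact absurd ⟨hu, h2⟩ hbx
          · exact ⟨h1, h4⟩
        have hua : u ≠ a0 := by rintro rfl; exact hadj hc2.2
        rw [if_pos rfl]
        exact nodup5 (ιinj u b0 hub) (ιinj u a0 hua) (ιinj u x hux) (ιinj u y huy)
          (ιinj b0 a0 (Ne.symm hc2.1)) (ιinj b0 x hb0x) (ιinj b0 y hb0y')
          (ιinj a0 x ha0x) (ιinj a0 y ha0y) (ιinj x y hxyne)
      · rw [if_neg (Ne.symm hvb0), if_neg hvx]
        exact nodup5 (ιinj u b0 hub) (ιinj u v huv) (ιinj u x hux) (ιinj u y huy)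
          (ιinj b0 v (Ne.symm (Ne.symm hvb0))) (ιinj b0 x hb0x) (ιinj b0 y hb0y')
          (ιinj v x hvx) (ιinj v y hvy) (ιinj x y hxyne)
  · -- u adj y, v adj x : path u-y-x-v
    have hnvy : ¬ H.Adj v y := fun h => hby ⟨hu, h⟩
    have hvb : v ≠ b0 := by rintro rfl; exact hnvy hb0y
    refine ⟨.cons hu (.cons hxy.symm (.cons hv.symm .nil)), ?_, ?_⟩
    · simp [Walk.isPath_def, hux, huy, huv, Ne.symm hxyne, Ne.symm hvx, Ne.symm hvy]
    · have hl : ((Walk.cons hu (Walk.cons hxy.symm (Walk.cons hv.symm .nil))).edges.map cE ++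
          (Walk.cons hu (Walk.cons hxy.symm (Walk.cons hv.symm .nil))).support.tail.dropLast.map ι)
          = [cE s(u,y), cE s(y,x), cE s(x,v), ι y, ι x] := by simp
      rw [hl, eyx, (eY u hu).1, (eX v hv hvy).2]
      by_cases hub0 : b0 = u
      · subst hub0
        have hc2 : a0 ≠ b0 ∧ H.Adj a0 b0 := by
          rcases hcase with ⟨_, h2⟩ | ⟨h1, _, _, h4, _⟩
          · exact absurd ⟨h2, hv⟩ hbx
          · exact ⟨h1, h4⟩
        have hva : v ≠ a0 := by rintro rfl; exact hadj hc2.2.symm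
        rw [if_pos rfl]
        exact nodup5 (ιinj a0 b0 hc2.1) (ιinj a0 v (Ne.symm hva)) (ιinj a0 y ha0y)
          (ιinj a0 x ha0x) (ιinj b0 v (Ne.symm hvb)) (ιinj b0 y hb0y') (ιinj b0 x hb0x)
          (ιinj v y hvy) (ιinj v x hvx) (ιinj y x (Ne.symm hxyne))
      · rw [if_neg (Ne.symm hub0), if_neg hux]
        exact nodup5 (ιinj u b0 (Ne.symm hub0)) (ιinj u v huv) (ιinj u y huy) (ιinj u x hux)
          (ιinj b0 v (Ne.symm hvb)) (ιinj b0 y hb0y') (ιinj b0 x hb0x)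
          (ιinj v y hvy) (ιinj v x hvx) (ιinj y x (Ne.symm hxyne))
  · exact absurd ⟨hu, hv⟩ hby

open TRCaux in
lemma trc_lb_doubleStar {V : Type*} [Fintype V] [DecidableEq V] (H : SimpleGraph V)
    (htree : H.IsTree) (x y a b : V) (hxy : H.Adj x y)
    (hax : H.Adj a x) (hay : a ≠ y) (hby : H.Adj b y) (hbx : b ≠ x)
    (hhost : ∀ w, w ≠ x → w ≠ y → ∀ z, H.Adj w z → z = x ∨ z = y)
    (hnotboth : ∀ w, w ≠ x → w ≠ y → ¬(H.Adj w x ∧ H.Adj w y))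
    {k : ℕ} (cE : Sym2 V → Fin k) (cV : V → Fin k) (hcol : IsTRCColoring H cE cV) :
    Fintype.card V + 1 ≤ k := by
  classical
  have uniq := htree.existsUnique_path
  have hxyne : x ≠ y := hxy.ne
  have haxne : a ≠ x := hax.ne
  have hbyne : b ≠ y := hby.ne
  have hab : a ≠ b := by
    rintro rfl
    exact hnotboth a haxne hay ⟨hax, hby⟩
  have nodup_of : ∀ (u v : V), u ≠ v → ∀ (p0 : H.Walk u v), p0.IsPath →
      (p0.edges.map cE ++ p0.support.tail.dropLast.map cV).Nodup := by
    intro u v hne p0 hp0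
    obtain ⟨p, hp, hnd⟩ := hcol u v hne
    obtain ⟨q, hq, huq⟩ := uniq u v
    rwa [show p0 = p from (huq p0 hp0).trans (huq p hp).symm]
  have fromN3 : ∀ {c1 c2 c3 : Fin k}, ([c1,c2,c3] : List (Fin k)).Nodup →
      c1 ≠ c2 ∧ c1 ≠ c3 ∧ c2 ≠ c3 := by
    intro c1 c2 c3 h
    simp only [List.nodup_cons, List.mem_cons, List.mem_singleton, List.not_mem_nil,
      or_false, not_or, List.nodup_nil, and_true] at h
    tauto
  have fromN5 : ∀ {c1 c2 c3 c4 c5 : Fin k}, ([c1,c2,c3,c4,c5] : List (Fin k)).Nodup →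
      c1≠c2 ∧ c1≠c3 ∧ c1≠c4 ∧ c1≠c5 ∧ c2≠c3 ∧ c2≠c4 ∧ c2≠c5 ∧ c3≠c4 ∧ c3≠c5 ∧ c4≠c5 := by
    intro c1 c2 c3 c4 c5 h
    simp only [List.nodup_cons, List.mem_cons, List.mem_singleton, List.not_mem_nil,
      or_false, not_or, List.nodup_nil, and_true] at h
    tauto
  -- colors of 3-walk w-x-y-w' (w adj x, w' adj y, both generic)
  have W5 : ∀ w w' : V, w ≠ x → w ≠ y → H.Adj w x → w' ≠ x → w' ≠ y → H.Adj w' y →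
      cE s(w,x) ≠ cE s(x,y) ∧ cE s(w,x) ≠ cE s(y,w') ∧ cE s(w,x) ≠ cV x ∧
      cE s(w,x) ≠ cV y ∧ cE s(x,y) ≠ cE s(y,w') ∧ cE s(x,y) ≠ cV x ∧
      cE s(x,y) ≠ cV y ∧ cE s(y,w') ≠ cV x ∧ cE s(y,w') ≠ cV y ∧ cV x ≠ cV y := by
    intro w w' hwx hwy hwax hw'x hw'y hw'ay
    have hww' : w ≠ w' := by
      rintro rfl
      exact hnotboth w hwx hwy ⟨hwax, hw'ay⟩
    have hp : (Walk.cons hwax (Walk.cons hxy (Walk.cons hw'ay.symm .nil))).IsPath := by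
      simp [Walk.isPath_def, hwx, hwy, hww', hxyne, Ne.symm hw'x, Ne.symm hw'y]
    have hnd := nodup_of w w' hww' _ hp
    have hl : ((Walk.cons hwax (Walk.cons hxy (Walk.cons hw'ay.symm .nil))).edges.map cE ++
        (Walk.cons hwax (Walk.cons hxy (Walk.cons hw'ay.symm .nil))).support.tail.dropLast.map cV)
        = [cE s(w,x), cE s(x,y), cE s(y,w'), cV x, cV y] := by simp
    rw [hl] at hnd
    exact fromN5 hnd
  -- colors of 2-walk w-x-y (w generic adj x)
  have W3x : ∀ w : V, w ≠ x → w ≠ y → H.Adj w x →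
      cE s(w,x) ≠ cE s(x,y) ∧ cE s(w,x) ≠ cV x ∧ cE s(x,y) ≠ cV x := by
    intro w hwx hwy hwax
    have hp : (Walk.cons hwax (Walk.cons hxy .nil)).IsPath := by
      simp [Walk.isPath_def, hwx, hwy, hxyne]
    have hnd := nodup_of w y hwy _ hp
    have hl : ((Walk.cons hwax (Walk.cons hxy .nil)).edges.map cE ++
        (Walk.cons hwax (Walk.cons hxy .nil)).support.tail.dropLast.map cV)
        = [cE s(w,x), cE s(x,y), cV x] := by simp
    rw [hl] at hnd
    exact fromN3 hnd
  have W3y : ∀ w : V, w ≠ x → w ≠ y → H.Adj w y →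
      cE s(w,y) ≠ cE s(y,x) ∧ cE s(w,y) ≠ cV y ∧ cE s(y,x) ≠ cV y := by
    intro w hwx hwy hway
    have hp : (Walk.cons hway (Walk.cons hxy.symm .nil)).IsPath := by
      simp [Walk.isPath_def, hwx, hwy, Ne.symm hxyne]
    have hnd := nodup_of w x hwx _ hp
    have hl : ((Walk.cons hway (Walk.cons hxy.symm .nil)).edges.map cE ++
        (Walk.cons hway (Walk.cons hxy.symm .nil)).support.tail.dropLast.map cV)
        = [cE s(w,y), cE s(y,x), cV y] := by simp
    rw [hl] at hnd
    exact fromN3 hnd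
  -- colors of 2-walk w-x-w' (both generic adj x)
  have W3xx : ∀ w w' : V, w ≠ w' → H.Adj w x → H.Adj w' x →
      cE s(w,x) ≠ cE s(x,w') := by
    intro w w' hww' hwax hw'ax
    have hp : (Walk.cons hwax (Walk.cons hw'ax.symm .nil)).IsPath := by
      simp [Walk.isPath_def, hwax.ne, hww', Ne.symm hw'ax.ne]
    have hnd := nodup_of w w' hww' _ hp
    have hl : ((Walk.cons hwax (Walk.cons hw'ax.symm .nil)).edges.map cE ++
        (Walk.cons hwax (Walk.cons hw'ax.symm .nil)).support.tail.dropLast.map cV)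
        = [cE s(w,x), cE s(x,w'), cV x] := by simp
    rw [hl] at hnd
    exact (fromN3 hnd).1
  have W3yy : ∀ w w' : V, w ≠ w' → H.Adj w y → H.Adj w' y →
      cE s(w,y) ≠ cE s(y,w') := by
    intro w w' hww' hway hw'ay
    have hp : (Walk.cons hway (Walk.cons hw'ay.symm .nil)).IsPath := by
      simp [Walk.isPath_def, hway.ne, hww', Ne.symm hw'ay.ne]
    have hnd := nodup_of w w' hww' _ hp
    have hl : ((Walk.cons hway (Walk.cons hw'ay.symm .nil)).edges.map cE ++
        (Walk.cons hway (Walk.cons hw'ay.symm .nil)).support.tail.dropLast.map cV)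
        = [cE s(w,y), cE s(y,w'), cV y] := by simp
    rw [hl] at hnd
    exact (fromN3 hnd).1
  have hdom : ∀ w : V, w ≠ x → w ≠ y → H.Adj w x ∨ H.Adj w y := by
    intro w hwx hwy
    obtain ⟨p⟩ := (htree.isConnected w x)
    cases p with
    | nil => exact absurd rfl hwx
    | cons h q =>
      rcases hhost w hwx hwy _ h with h' | h'
      · exact Or.inl (h' ▸ h)
      · exact Or.inr (h' ▸ h)
  set g : V → Fin k := fun w =>
    if w = x then cV x else if w = y then cV y
    else if H.Adj w x then cE s(w,x) else cE s(w,y) with hg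
  -- the key inequalities
  have F0 : cV x ≠ cV y := (W5 a b haxne hay hax hbx hbyne hby).2.2.2.2.2.2.2.2.2
  have F6x : cE s(x,y) ≠ cV x := (W3x a haxne hay hax).2.2
  have F6y : cE s(x,y) ≠ cV y := (W5 a b haxne hay hax hbx hbyne hby).2.2.2.2.2.2.1
  have gval : ∀ w : V, w ≠ x → w ≠ y →
      (H.Adj w x → g w = cE s(w,x)) ∧ (¬ H.Adj w x → H.Adj w y → g w = cE s(w,y)) := by
    intro w hwx hwy
    constructor
    · intro h; simp [hg, hwx, hwy, h]
    · intro h h'; simp [hg, hwx, hwy, h]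
  -- generic-vs-generic and generic-vs-center inequalities
  have Ggen : ∀ w w' : V, w ≠ x → w ≠ y → w' ≠ x → w' ≠ y → w ≠ w' → g w ≠ g w' := by
    intro w w' hwx hwy hw'x hw'y hww'
    rcases hdom w hwx hwy with hw | hw <;> rcases hdom w' hw'x hw'y with hw' | hw'
    · rw [(gval w hwx hwy).1 hw, (gval w' hw'x hw'y).1 hw']
      have := W3xx w w' hww' hw hw'
      rwa [Sym2.eq_swap (a := x) (b := w')] at this
    · have hnw' : ¬ H.Adj w' x := fun h => hnotboth w' hw'x hw'y ⟨h, hw'⟩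
      rw [(gval w hwx hwy).1 hw, (gval w' hw'x hw'y).2 hnw' hw']
      have := (W5 w w' hwx hwy hw hw'x hw'y hw').2.1
      rwa [Sym2.eq_swap (a := y) (b := w')] at this
    · have hnw : ¬ H.Adj w x := fun h => hnotboth w hwx hwy ⟨h, hw⟩
      rw [(gval w hwx hwy).2 hnw hw, (gval w' hw'x hw'y).1 hw']
      have := (W5 w' w hw'x hw'y hw' hwx hwy hw).2.1
      rw [Sym2.eq_swap (a := y) (b := w)] at this
      exact this.symm
    · have hnw : ¬ H.Adj w x := fun h => hnotboth w hwx hwy ⟨h, hw⟩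
      rw [(gval w hwx hwy).2 hnw hw, (gval w' hw'x hw'y).2
        (fun h => hnotboth w' hw'x hw'y ⟨h, hw'⟩) hw']
      have := W3yy w w' hww' hw hw'
      rwa [Sym2.eq_swap (a := y) (b := w')] at this
  have Gcx : ∀ w : V, w ≠ x → w ≠ y → g w ≠ cV x := by
    intro w hwx hwy
    rcases hdom w hwx hwy with hw | hw
    · rw [(gval w hwx hwy).1 hw]
      exact (W3x w hwx hwy hw).2.1
    · have hnw : ¬ H.Adj w x := fun h => hnotboth w hwx hwy ⟨h, hw⟩
      rw [(gval w hwx hwy).2 hnw hw]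
      have := (W5 a w haxne hay hax hwx hwy hw).2.2.2.2.2.2.2.1
      rwa [Sym2.eq_swap (a := y) (b := w)] at this
  have Gcy : ∀ w : V, w ≠ x → w ≠ y → g w ≠ cV y := by
    intro w hwx hwy
    rcases hdom w hwx hwy with hw | hw
    · rw [(gval w hwx hwy).1 hw]
      exact (W5 w b hwx hwy hw hbx hbyne hby).2.2.2.1
    · have hnw : ¬ H.Adj w x := fun h => hnotboth w hwx hwy ⟨h, hw⟩
      rw [(gval w hwx hwy).2 hnw hw]
      exact (W3y w hwx hwy hw).2.1
  have hgx : g x = cV x := by simp [hg]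
  have hgy : g y = cV y := by simp [hg, Ne.symm hxyne]
  have Gexy : ∀ w : V, g w ≠ cE s(x,y) := by
    intro w
    by_cases hwx : w = x
    · rw [hwx, hgx]; exact F6x.symm
    by_cases hwy : w = y
    · rw [hwy, hgy]; exact F6y.symm
    rcases hdom w hwx hwy with hw | hw
    · rw [(gval w hwx hwy).1 hw]
      exact (W3x w hwx hwy hw).1
    · have hnw : ¬ H.Adj w x := fun h => hnotboth w hwx hwy ⟨h, hw⟩
      rw [(gval w hwx hwy).2 hnw hw]
      have := (W3y w hwx hwy hw).1
      rwa [Sym2.eq_swap (a := y) (b := x)] at this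
  have ginj : Function.Injective g := by
    intro w w' heq
    by_contra hne
    by_cases hwx : w = x
    · rw [hwx, hgx] at heq
      by_cases hw'y : w' = y
      · rw [hw'y, hgy] at heq
        exact F0 heq
      · refine Gcx w' ?_ hw'y heq.symm
        rintro rfl; exact hne hwx
    by_cases hwy : w = y
    · rw [hwy, hgy] at heq
      by_cases hw'x : w' = x
      · rw [hw'x, hgx] at heq
        exact F0 heq.symm
      · refine Gcy w' hw'x ?_ heq.symm
        rintro rfl; exact hne hwy
    by_cases hw'x : w' = x
    · rw [hw'x, hgx] at heq
      exact Gcx w hwx hwy heq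
    by_cases hw'y : w' = y
    · rw [hw'y, hgy] at heq
      exact Gcy w hwx hwy heq
    exact Ggen w w' hwx hwy hw'x hw'y hne heq
  -- counting
  have hcard : (insert (cE s(x,y)) (Finset.univ.image g)).card = Fintype.card V + 1 := by
    rw [Finset.card_insert_of_notMem (by
      simp only [Finset.mem_image, Finset.mem_univ, true_and]
      rintro ⟨w, hw⟩
      exact Gexy w hw)]
    rw [Finset.card_image_of_injective _ ginj, Finset.card_univ]
  calc Fintype.card V + 1 = _ := hcard.symm
    _ ≤ Fintype.card (Fin k) := Finset.card_le_univ _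
    _ = k := Fintype.card_fin k

lemma acyclic_of_struct {V : Type*} [DecidableEq V] (H : SimpleGraph V) (x y : V)
    (hP1 : ∀ w, w ≠ x → w ≠ y → ¬(H.Adj w x ∧ H.Adj w y))
    (hP2 : ∀ a b, H.Adj a b → a = x ∨ a = y ∨ b = x ∨ b = y) :
    H.IsAcyclic := by
  have key : ∀ (s t : V), (∀ w, w ≠ s → w ≠ t → ¬(H.Adj w s ∧ H.Adj w t)) →
      (∀ a b, H.Adj a b → a = s ∨ a = t ∨ b = s ∨ b = t) →
      ∀ c : H.Walk s s, ¬ c.IsCycle := by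
    intro s t h1 h2 c hc
    cases c with
    | nil => exact hc.ne_nil rfl
    | cons ha1 q =>
      cases q with
      | nil => exact ha1.ne rfl
      | cons ha2 q2 =>
        cases q2 with
        | nil => simpa using hc.three_le_length
        | cons ha3 q3 =>
          rename_i v1 v2 v3
          have hnd := hc.support_nodup
          simp only [Walk.support_cons, List.tail_cons, List.nodup_cons] at hnd
          have hv1s : v1 ≠ s := by
            intro h
            exact hnd.1 (by rw [h]; exact List.mem_cons_of_mem _ (Walk.end_mem_support q3))
          have hv12 : v1 ≠ v2 := by
            intro h
            exact hnd.1 (by rw [h]; exact List.mem_cons_self)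
          have hv13 : v1 ≠ v3 := by
            intro h
            exact hnd.1 (by rw [h]; exact List.mem_cons_of_mem _ (Walk.start_mem_support q3))
          have hv2s : v2 ≠ s := by
            intro h
            exact hnd.2.1 (by rw [h]; exact Walk.end_mem_support q3)
          have hv23 : v2 ≠ v3 := by
            intro h
            exact hnd.2.1 (by rw [h]; exact Walk.start_mem_support q3)
          rcases h2 v1 v2 ha2 with h | h | h | h
          · exact hv1s h
          · -- v1 = t
            rcases h2 v2 v3 ha3 with h' | h' | h' | h'
            · exact hv2s h'
            · exact hv12 (h.trans h'.symm)
            · -- v3 = s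
              exact h1 v2 hv2s (fun hh => hv12 (hh.trans h.symm).symm) ⟨h' ▸ ha3, h ▸ ha2.symm⟩
            · exact hv13 (h.trans h'.symm)
          · exact hv2s h
          · -- v2 = t
            exact h1 v1 hv1s (fun hh => hv12 (hh.trans h.symm)) ⟨ha1.symm, h ▸ ha2⟩
  intro v c hc
  have hmem : x ∈ c.support ∨ y ∈ c.support := by
    cases c with
    | nil => exact absurd rfl hc.ne_nil
    | cons h q =>
      rcases hP2 _ _ h with h' | h' | h' | h'
      · exact Or.inl (h' ▸ Walk.start_mem_support _)
      · exact Or.inr (h' ▸ Walk.start_mem_support _)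
      · refine Or.inl ?_
        rw [Walk.support_cons]
        exact List.mem_cons_of_mem _ (h' ▸ Walk.start_mem_support q)
      · refine Or.inr ?_
        rw [Walk.support_cons]
        exact List.mem_cons_of_mem _ (h' ▸ Walk.start_mem_support q)
  rcases hmem with hm | hm
  · exact key x y hP1 hP2 _ (hc.rotate hm)
  · have hP1' : ∀ w, w ≠ y → w ≠ x → ¬(H.Adj w y ∧ H.Adj w x) :=
      fun w h1 h2 hh => hP1 w h2 h1 ⟨hh.2, hh.1⟩
    have hP2' : ∀ a b, H.Adj a b → a = y ∨ a = x ∨ b = y ∨ b = x := by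
      intro a b hab; rcases hP2 a b hab with h|h|h|h <;> tauto
    exact key y x hP1' hP2' _ (hc.rotate hm)


theorem stmt_16 {V : Type*} [Fintype V] [DecidableEq V] (G : SimpleGraph V)
    [DecidableRel G.Adj] (hconn : G.Connected) (hcconn : Gᶜ.Connected)
    (hdiam : G.diam = 3) :
    trc Gᶜ ≤ Fintype.card V + 1 ∧
      (trc Gᶜ = Fintype.card V + 1 ↔ IsDoubleStar Gᶜ) := by
  classical
  have hnt : Nontrivial V := G.nontrivial_of_diam_ne_zero (by rw [hdiam]; omega)
  obtain ⟨x, y, hdist⟩ := G.exists_dist_eq_diam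
  rw [hdiam] at hdist
  have hxyne : x ≠ y := by
    rintro rfl; rw [SimpleGraph.dist_self] at hdist; omega
  have hnadj : ¬ G.Adj x y := by
    intro h
    have h2 := SimpleGraph.dist_le (Walk.cons h .nil)
    simp only [Walk.length_cons, Walk.length_nil] at h2
    omega
  have hGdom : ∀ w, w ≠ x → w ≠ y → ¬(G.Adj w x ∧ G.Adj w y) := by
    rintro w h1 h2 ⟨ha, hb⟩
    have h3 := SimpleGraph.dist_le (Walk.cons ha.symm (Walk.cons hb .nil))
    simp only [Walk.length_cons, Walk.length_nil] at h3
    omega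
  have hxy : Gᶜ.Adj x y := by rw [compl_adj]; exact ⟨hxyne, hnadj⟩
  have hdom : ∀ w, w ≠ x → w ≠ y → Gᶜ.Adj w x ∨ Gᶜ.Adj w y := by
    intro w h1 h2
    by_cases hwx : G.Adj w x
    · exact Or.inr (by rw [compl_adj]; exact ⟨h2, fun h => hGdom w h1 h2 ⟨hwx, h⟩⟩)
    · exact Or.inl (by rw [compl_adj]; exact ⟨h1, hwx⟩)
  obtain ⟨cE0, cV0, hcol0⟩ := mem_of_dom Gᶜ x y hxy hdom
  have hmem : (Fintype.card V + 1) ∈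
      {k | ∃ (cE : Sym2 V → Fin k) (cV : V → Fin k), IsTRCColoring Gᶜ cE cV} :=
    ⟨cE0, cV0, hcol0⟩
  have comp1 : trc Gᶜ ≤ Fintype.card V + 1 := Nat.sInf_le hmem
  refine ⟨comp1, ?_⟩
  by_cases hP : (∃ w, w ≠ x ∧ w ≠ y ∧ Gᶜ.Adj w x ∧ Gᶜ.Adj w y) ∨
      (∃ a b, Gᶜ.Adj a b ∧ a ≠ x ∧ a ≠ y ∧ b ≠ x ∧ b ≠ y)
  · -- non-tree case : trc ≤ n and not a double star
    have hle : trc Gᶜ ≤ Fintype.card V := by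
      rcases hP with ⟨w, h1, h2, h3, h4⟩ | ⟨a, b, hab, ha1, ha2, hb1, hb2⟩
      · exact trc_le_of_pattern Gᶜ x y w w hxy hdom h4 h1 (Or.inl ⟨rfl, h3⟩)
      · rcases hdom b hb1 hb2 with hbx | hby
        · have hdom' : ∀ w, w ≠ y → w ≠ x → Gᶜ.Adj w y ∨ Gᶜ.Adj w x :=
            fun w h1 h2 => (hdom w h2 h1).symm
          exact trc_le_of_pattern Gᶜ y x b a hxy.symm hdom' hbx hb2
            (Or.inr ⟨hab.ne, ha2, ha1, hab, (hdom a ha1 ha2).symm⟩)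
        · exact trc_le_of_pattern Gᶜ x y b a hxy hdom hby hb1
            (Or.inr ⟨hab.ne, ha1, ha2, hab, hdom a ha1 ha2⟩)
    have hnDS : ¬ IsDoubleStar Gᶜ := by
      rintro ⟨htree, u, v, huv, hdeg⟩
      have two_le : ∀ (w z1 z2 : V), z1 ≠ z2 → Gᶜ.Adj w z1 → Gᶜ.Adj w z2 →
          2 ≤ Gᶜ.degree w := by
        intro w z1 z2 h h1 h2
        have hsub : ({z1, z2} : Finset V) ⊆ Gᶜ.neighborFinset w := by
          intro z hz
          simp only [Finset.mem_insert, Finset.mem_singleton] at hz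
          rcases hz with rfl | rfl <;> simpa [SimpleGraph.mem_neighborFinset]
        calc 2 = ({z1, z2} : Finset V).card := by
              rw [Finset.card_insert_of_notMem (by simp [h]), Finset.card_singleton]
          _ ≤ (Gᶜ.neighborFinset w).card := Finset.card_le_card hsub
      rcases hP with ⟨w, h1, h2, h3, h4⟩ | ⟨a, b, hab, ha1, ha2, hb1, hb2⟩
      · by_cases hwu : w = u
        · by_cases hxv : x = v
          · have hyu : y ≠ u := fun hh => h2 (hwu.trans hh.symm)
            have hyv : y ≠ v := fun hh => hxyne (hxv.trans hh.symm)
            have hd := hdeg y hyu hyv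
            have := two_le y x w (Ne.symm h1) hxy.symm h4.symm
            omega
          · have hxu : x ≠ u := fun hh => h1 (hwu.trans hh.symm)
            have hd := hdeg x hxu hxv
            have := two_le x y w (Ne.symm h2) hxy h3.symm
            omega
        · by_cases hwv : w = v
          · by_cases hxu : x = u
            · have hyu : y ≠ u := fun hh => hxyne (hxu.trans hh.symm)
              have hyv : y ≠ v := fun hh => h2 (hwv.trans hh.symm)
              have hd := hdeg y hyu hyv
              have := two_le y x w (Ne.symm h1) hxy.symm h4.symm
              omega
            · have hxv : x ≠ v := fun hh => h1 (hwv.trans hh.symm)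
              have hd := hdeg x hxu hxv
              have := two_le x y w (Ne.symm h2) hxy h3.symm
              omega
          · have hd := hdeg w hwu hwv
            have := two_le w x y hxyne h3 h4
            omega
      · -- an edge avoiding x and y
        have haU : a = u ∨ a = v := by
          by_contra hcon
          push_neg at hcon
          have hd := hdeg a hcon.1 hcon.2
          rcases hdom a ha1 ha2 with h | h
          · have := two_le a b x hb1 hab h
            omega
          · have := two_le a b y hb2 hab h
            omega
        have hbU : b = u ∨ b = v := by
          by_contra hcon
          push_neg at hcon
          have hd := hdeg b hcon.1 hcon.2
          rcases hdom b hb1 hb2 with h | h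
          · have := two_le b a x ha1 hab.symm h
            omega
          · have := two_le b a y ha2 hab.symm h
            omega
        have huvxy : u ≠ x ∧ u ≠ y ∧ v ≠ x ∧ v ≠ y := by
          rcases haU with h | h <;> rcases hbU with h' | h'
          · exact absurd (h.trans h'.symm) hab.ne
          · exact ⟨h ▸ ha1, h ▸ ha2, h' ▸ hb1, h' ▸ hb2⟩
          · exact ⟨h' ▸ hb1, h' ▸ hb2, h ▸ ha1, h ▸ ha2⟩
          · exact absurd (h.trans h'.symm) hab.ne
        rcases hdom u huvxy.1 huvxy.2.1 with h | h
        · have hd := hdeg x (Ne.symm huvxy.1) (Ne.symm huvxy.2.2.1)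
          have := two_le x y u (fun hh => huvxy.2.1 hh.symm) hxy h.symm
          omega
        · have hd := hdeg y (Ne.symm huvxy.2.1) (Ne.symm huvxy.2.2.2)
          have := two_le y x u (fun hh => huvxy.1 hh.symm) hxy.symm h.symm
          omega
    exact iff_of_false (fun h => by rw [h] at hle; omega) hnDS
  · -- double star case
    push_neg at hP
    obtain ⟨hP1, hP2⟩ := hP
    have hnoc : ∀ w, w ≠ x → w ≠ y → ¬(Gᶜ.Adj w x ∧ Gᶜ.Adj w y) :=
      fun w h1 h2 hh => hP1 w h1 h2 hh.1 hh.2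
    have hnoe : ∀ a b, Gᶜ.Adj a b → a = x ∨ a = y ∨ b = x ∨ b = y := by
      intro a b hab
      by_cases h1 : a = x
      · exact Or.inl h1
      by_cases h2 : a = y
      · exact Or.inr (Or.inl h2)
      by_cases h3 : b = x
      · exact Or.inr (Or.inr (Or.inl h3))
      · exact Or.inr (Or.inr (Or.inr (hP2 a b hab h1 h2 h3)))
    have htree : Gᶜ.IsTree := ⟨hcconn, acyclic_of_struct Gᶜ x y hnoc hnoe⟩
    have hhost : ∀ w, w ≠ x → w ≠ y → ∀ z, Gᶜ.Adj w z → z = x ∨ z = y := by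
      intro w h1 h2 z hz
      rcases hnoe w z hz with h | h | h | h
      · exact absurd h h1
      · exact absurd h h2
      · exact Or.inl h
      · exact Or.inr h
    have hdeg : ∀ w : V, w ≠ x → w ≠ y → Gᶜ.degree w = 1 := by
      intro w h1 h2
      rcases hdom w h1 h2 with h | h
      · have hnb : Gᶜ.neighborFinset w = {x} := by
          ext z
          simp only [SimpleGraph.mem_neighborFinset, Finset.mem_singleton]
          constructor
          · intro hz
            rcases hhost w h1 h2 z hz with h' | h'
            · exact h'
            · exact absurd ⟨h, h' ▸ hz⟩ (hnoc w h1 h2)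
          · rintro rfl; exact h
        rw [SimpleGraph.degree, hnb, Finset.card_singleton]
      · have hnw : ¬ Gᶜ.Adj w x := fun h' => hnoc w h1 h2 ⟨h', h⟩
        have hnb : Gᶜ.neighborFinset w = {y} := by
          ext z
          simp only [SimpleGraph.mem_neighborFinset, Finset.mem_singleton]
          constructor
          · intro hz
            rcases hhost w h1 h2 z hz with h' | h'
            · exact absurd (h' ▸ hz) hnw
            · exact h'
          · rintro rfl; exact h
        rw [SimpleGraph.degree, hnb, Finset.card_singleton]
    have hDS : IsDoubleStar Gᶜ := ⟨htree, x, y, hxy, hdeg⟩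
    -- leaves on both sides, via connectivity of G
    have hA : ∃ a, a ≠ x ∧ a ≠ y ∧ Gᶜ.Adj a x := by
      by_contra hcon
      push_neg at hcon
      have hall : ∀ w, w ≠ y → Gᶜ.Adj w y := by
        intro w hw
        by_cases hwx : w = x
        · rw [hwx]; exact hxy
        · exact (hdom w hwx hw).resolve_left (fun h => hcon w hwx hw h)
      obtain ⟨p⟩ := hconn.preconnected y x
      cases p with
      | nil => exact hxyne rfl
      | cons h q =>
        rename_i z
        have hzy : z ≠ y := h.ne'
        have := hall z hzy
        rw [compl_adj] at this
        exact this.2 h.symm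
    have hB : ∃ b, b ≠ x ∧ b ≠ y ∧ Gᶜ.Adj b y := by
      by_contra hcon
      push_neg at hcon
      have hall : ∀ w, w ≠ x → Gᶜ.Adj w x := by
        intro w hw
        by_cases hwy : w = y
        · rw [hwy]; exact hxy.symm
        · exact (hdom w hw hwy).resolve_right (fun h => hcon w hw hwy h)
      obtain ⟨p⟩ := hconn.preconnected x y
      cases p with
      | nil => exact hxyne rfl
      | cons h q =>
        rename_i z
        have hzx : z ≠ x := h.ne'
        have := hall z hzx
        rw [compl_adj] at this
        exact this.2 h.symm
    obtain ⟨a, hax', hay', hax⟩ := hA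
    obtain ⟨b, hbx', hby', hby⟩ := hB
    have hlow : Fintype.card V + 1 ≤ trc Gᶜ := by
      apply le_csInf ⟨_, hmem⟩
      rintro k ⟨cE, cV, hcol⟩
      exact trc_lb_doubleStar Gᶜ htree x y a b hxy hax hay' hby hbx' hhost hnoc cE cV hcol
    exact iff_of_true (le_antisymm comp1 hlow) hDS
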